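/- If type(R) = dim_k ((x₁R :_R m_R)/x₁R) = 1 (e.g. if R is Gorenstein), then C_R + x₁R = (x₁R :_R m_R). -/

import Mathlib

open PowerSeries
set_option synthInstance.maxHeartbeats 1000000
set_option maxHeartbeats 1000000

noncomputable section

def mxl {k : Type*} [Field k] (R : Subalgebra k (PowerSeries k)) : Ideal R :=
  RingHom.ker (((constantCoeff : PowerSeries k →+* k)).comp R.val.toRingHom)

def condIdeal {k : Type*} [Field k] (R : Subalgebra k (PowerSeries k)) : Ideal R where
  carrier := {r : R | ∀ g : PowerSeries k, (r : PowerSeries k) * g ∈ R}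
  add_mem' := by
    intro a b ha hb g
    have := R.add_mem (ha g) (hb g)
    simpa [add_mul] using this
  zero_mem' := by
    intro g
    simpa using R.zero_mem
  smul_mem' := by
    intro c x hx g
    have h : ((c • x : R) : PowerSeries k) * g
        = (c : PowerSeries k) * ((x : PowerSeries k) * g) := by
      rw [smul_eq_mul, MulMemClass.coe_mul]
      ring
    rw [h]
    exact R.mul_mem c.2 (hx g)

/-- The reduced type `s(R) = dim_k (C_R + x₁R)/(x₁R)`, computed as the dimension of the
image of the conductor in `R/(x₁)`. -/
def redType {k : Type*} [Field k] (R : Subalgebra k (PowerSeries k)) (x1 : R) : ℕ :=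
  Module.finrank k (Submodule.restrictScalars k
    (Ideal.map (Ideal.Quotient.mk (Ideal.span {x1})) (condIdeal R)))


/-- The Cohen–Macaulay type `dim_k (x₁R :_R m_R)/(x₁R)`, computed as the dimension of the
image of `(x₁R :_R m_R)` in `R/(x₁)`. -/
def cmType {k : Type*} [Field k] (R : Subalgebra k (PowerSeries k)) (x1 : R) : ℕ :=
  Module.finrank k (Submodule.restrictScalars k
    (Ideal.map (Ideal.Quotient.mk (Ideal.span {x1}))
      (Submodule.colon (Ideal.span {x1}) (mxl R))))

lemma myDvd_of_le_order {k : Type*} [Field k] {f g : PowerSeries k} (hf : f ≠ 0)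
    (h : f.order ≤ g.order) : f ∣ g := by
  by_cases hg : g = 0
  · simp [hg]
  have hf' : f.order < ⊤ := order_finite_iff_ne_zero.2 hf
  have hg' : g.order < ⊤ := order_finite_iff_ne_zero.2 hg
  set a := f.order.lift hf' with ha
  set b := g.order.lift hg' with hb
  have hab : a ≤ b := by
    have h2 : (a : ℕ∞) ≤ (b : ℕ∞) := by
      rw [ENat.coe_lift, ENat.coe_lift]; exact h
    exact_mod_cast h2
  have hfe : X ^ a * divXPowOrder f = f := by
    rw [ha, ENat.lift_eq_toNat_of_lt_top]; exact X_pow_order_mul_divXPowOrder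
  have hge : X ^ b * divXPowOrder g = g := by
    rw [hb, ENat.lift_eq_toNat_of_lt_top]; exact X_pow_order_mul_divXPowOrder
  obtain ⟨u, hu⟩ := isUnit_divided_by_X_pow_order hf
  refine ⟨(↑u⁻¹ : PowerSeries k) * (X ^ (b - a) * divXPowOrder g), ?_⟩
  have hba : a + (b - a) = b := Nat.add_sub_cancel' hab
  have h3 : (X : PowerSeries k) ^ b = X ^ a * X ^ (b - a) := by
    rw [← pow_add, hba]
  calc g = X ^ b * divXPowOrder g := hge.symm
    _ = X ^ a * (↑u * ↑u⁻¹) * (X ^ (b - a) * divXPowOrder g) := by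
        rw [u.mul_inv, h3]; ring
    _ = f * ((↑u⁻¹ : PowerSeries k) * (X ^ (b - a) * divXPowOrder g)) := by
        rw [← hfe, hu]; ring

lemma mySub_eq {K M : Type*} [Field K] [AddCommGroup M] [Module K M]
    {p q : Submodule K M} (hpq : p ≤ q) (hq : Module.finrank K q = 1) (hp : p ≠ ⊥) : p = q := by
  have hfin : FiniteDimensional K q := FiniteDimensional.of_finrank_pos (hq ▸ one_pos)
  set p' := p.comap q.subtype with hp'
  have hp'top : p' = ⊤ := by
    apply Submodule.eq_top_of_finrank_eq
    have hle : Module.finrank K p' ≤ Module.finrank K q := Submodule.finrank_le p'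
    have hpos : 0 < Module.finrank K p' := by
      rw [Module.finrank_pos_iff]
      obtain ⟨y, hy, hy0⟩ := Submodule.exists_mem_ne_zero_of_ne_bot hp
      refine ⟨⟨⟨⟨y, hpq hy⟩, hy⟩, 0, fun h => hy0 ?_⟩⟩
      have h2 := congrArg (fun z : p' => ((z : q) : M)) h
      simpa using h2
    omega
  calc p = q ⊓ p := (inf_eq_right.2 hpq).symm
    _ = Submodule.map q.subtype p' := (Submodule.map_comap_subtype q p).symm
    _ = Submodule.map q.subtype ⊤ := by rw [hp'top]
    _ = q := Submodule.map_subtype_top q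

theorem stmt19 {k : Type*} [Field k] [IsAlgClosed k] [CharZero k]
    (R : Subalgebra k (PowerSeries k)) (hR : R ≠ ⊤)
    (hN : ∃ N : ℕ, 1 ≤ N ∧ ∀ g : PowerSeries k, (X : PowerSeries k) ^ N * g ∈ R)
    (a1 : ℕ) (ha1pos : 0 < a1) (x1 : PowerSeries k) (hx1R : x1 ∈ R)
    (hx1ord : x1.order = a1)
    (ha1min : ∀ f ∈ R, f ≠ 0 → (constantCoeff : PowerSeries k →+* k) f = 0 → (a1 : ℕ∞) ≤ f.order)
    (hGor : cmType R ⟨x1, hx1R⟩ = 1) :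
    condIdeal R ⊔ Ideal.span {(⟨x1, hx1R⟩ : R)}
      = Submodule.colon (Ideal.span {(⟨x1, hx1R⟩ : R)}) (mxl R) := by
  obtain ⟨N, hNle, hNmem⟩ := hN
  set x : R := (⟨x1, hx1R⟩ : R) with hxdef
  set J : Ideal R := Ideal.span {x} with hJdef
  set S : Ideal R := Submodule.colon J (mxl R) with hSdef
  have hx1ne : x1 ≠ 0 := by
    rw [← order_finite_iff_ne_zero, hx1ord]
    exact WithTop.coe_lt_top a1
  have hdiv : ∀ f : PowerSeries k, (a1 : ℕ∞) ≤ f.order → x1 ∣ f := by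
    intro f hf
    exact myDvd_of_le_order hx1ne (by rw [hx1ord]; exact hf)
  -- J ≤ S
  have hJS : J ≤ S := by
    intro r hr
    rw [hSdef, Submodule.mem_colon]
    intro p _
    rw [smul_eq_mul]
    exact Ideal.mul_mem_right _ _ hr
  -- condIdeal ≤ S
  have hCS : condIdeal R ≤ S := by
    intro c hc
    rw [hSdef, Submodule.mem_colon]
    intro p hp
    by_cases hp0 : p = 0
    · rw [hp0, smul_zero]; exact J.zero_mem
    · have hpne : (p : PowerSeries k) ≠ 0 := fun h => hp0 (Subtype.ext h)
      have hp0c : (constantCoeff : PowerSeries k →+* k) (p : PowerSeries k) = 0 := by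
        simpa using RingHom.mem_ker.1 hp
      have hord := ha1min p p.2 hpne hp0c
      obtain ⟨g, hg⟩ := hdiv p hord
      have hcg : (c : PowerSeries k) * g ∈ R := hc g
      rw [smul_eq_mul, hJdef, Ideal.mem_span_singleton']
      refine ⟨⟨(c : PowerSeries k) * g, hcg⟩, ?_⟩
      apply Subtype.ext
      show ((c : PowerSeries k) * g) * x1 = ((c * p : R) : PowerSeries k)
      rw [MulMemClass.coe_mul, hg]
      ring
  -- existence of conductor element not in J
  have hkey : ∃ c ∈ condIdeal R, c ∉ J := by
    by_contra hcon
    push_neg at hcon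
    have claim : ∀ n : ℕ, ∀ c : R, c ∈ condIdeal R → (c : PowerSeries k) ≠ 0 →
        (c : PowerSeries k).order = (n : ℕ∞) → False := by
      intro n
      induction n using Nat.strong_induction_on with
      | _ n ih =>
        intro c hc hcne hcord
        obtain ⟨r, hr⟩ := Ideal.mem_span_singleton'.1 (hcon c hc)
        have hr1 : (r : PowerSeries k) * x1 = (c : PowerSeries k) := by
          have := congrArg (Subtype.val) hr
          simpa using this
        have hrC : r ∈ condIdeal R := by
          intro g
          have hcg : (c : PowerSeries k) * g ∈ R := hc g
          have hcgC : (⟨(c : PowerSeries k) * g, hcg⟩ : R) ∈ condIdeal R := by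
            intro h
            have := hc (g * h)
            simpa [mul_assoc] using this
          obtain ⟨s, hs⟩ := Ideal.mem_span_singleton'.1 (hcon _ hcgC)
          have hs1 : (s : PowerSeries k) * x1 = (c : PowerSeries k) * g := by
            have := congrArg (Subtype.val) hs
            simpa using this
          have hcan : (r : PowerSeries k) * g * x1 = (s : PowerSeries k) * x1 := by
            rw [hs1, ← hr1]; ring
          have heq := mul_right_cancel₀ hx1ne hcan
          rw [heq]
          exact s.2
        have hrne : (r : PowerSeries k) ≠ 0 := fun h => hcne (by rw [← hr1, h, zero_mul])
        have hrfin : (r : PowerSeries k).order < ⊤ := order_finite_iff_ne_zero.2 hrne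
        set m := (r : PowerSeries k).order.lift hrfin with hm
        have hmord : (r : PowerSeries k).order = (m : ℕ∞) := (ENat.coe_lift _ _).symm
        have hordc : ((c : PowerSeries k)).order = (m : ℕ∞) + (a1 : ℕ∞) := by
          rw [← hr1, order_mul, hx1ord, hmord]
        have hnm : n = m + a1 := by
          have h4 : (n : ℕ∞) = ((m + a1 : ℕ) : ℕ∞) := by
            rw [← hcord, hordc, Nat.cast_add]
          exact_mod_cast h4
        exact ih m (by omega) r hrC hrne hmord
    have hXN : (X : PowerSeries k) ^ N ∈ R := by simpa using hNmem 1
    have hXNC : (⟨(X : PowerSeries k) ^ N, hXN⟩ : R) ∈ condIdeal R := fun g => hNmem g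
    have hXNne : (X : PowerSeries k) ^ N ≠ 0 := pow_ne_zero _ X_ne_zero
    exact claim N _ hXNC hXNne (by simp [order_X_pow])
  obtain ⟨c, hcC, hcJ⟩ := hkey
  set Q := Ideal.Quotient.mk J with hQ
  have hGor' : Module.finrank k (Submodule.restrictScalars k (Ideal.map Q S)) = 1 := hGor
  have hMle : Ideal.map Q (condIdeal R) ≤ Ideal.map Q S := Ideal.map_mono hCS
  have hWne : Submodule.restrictScalars k (Ideal.map Q (condIdeal R)) ≠ ⊥ := by
    intro h
    have hmem : Q c ∈ Submodule.restrictScalars k (Ideal.map Q (condIdeal R)) :=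
      Ideal.mem_map_of_mem Q hcC
    rw [h] at hmem
    have : Q c = 0 := by simpa using hmem
    exact hcJ (Ideal.Quotient.eq_zero_iff_mem.1 this)
  have hWV : Submodule.restrictScalars k (Ideal.map Q (condIdeal R))
      = Submodule.restrictScalars k (Ideal.map Q S) :=
    mySub_eq (fun y hy => hMle hy) hGor' hWne
  have hMeq : Ideal.map Q (condIdeal R) = Ideal.map Q S := by
    ext y
    constructor
    · exact fun h => hMle h
    · intro h
      have h5 : y ∈ Submodule.restrictScalars k (Ideal.map Q S) := h
      rw [← hWV] at h5
      exact h5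
  have hsurj : Function.Surjective Q := Ideal.Quotient.mk_surjective
  have h1 : Ideal.comap Q (Ideal.map Q (condIdeal R)) = condIdeal R ⊔ J := by
    rw [Ideal.comap_map_of_surjective Q hsurj, ← RingHom.ker_eq_comap_bot, hQ, Ideal.mk_ker]
  have h2 : Ideal.comap Q (Ideal.map Q S) = S := by
    rw [Ideal.comap_map_of_surjective Q hsurj, ← RingHom.ker_eq_comap_bot, hQ, Ideal.mk_ker,
      sup_eq_left.2 hJS]
  rw [← h1, hMeq, h2]

end
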